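/- Let (M,F,g) be a foliated Riemannian manifold, f a smooth positive basic function, and g_f the warped metric. For vector fields X, Y, Z, W all orthogonal to F, the curvature tensors satisfy ⟨R^f(X,Y)Z,W⟩_f = ⟨R(X,Y)Z,W⟩ − 2(1−f²)⟨A(X,Y),A(Z,W)⟩ + (1−f²)(⟨A(X,W),A(Y,Z)⟩ − ⟨A(X,Z),A(Y,W)⟩) − ((1−f²)/f²)(⟨S(X,W),S(Y,Z)⟩ − ⟨S(X,Z),S(Y,W)⟩), where A and S are the integrability tensor and second fundamental form of F^⊥. -/
import Mathlib


open scoped RealInnerProductSpace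

/-- Abstract model of the smooth vector-field calculus of a foliated Riemannian
manifold `(M, 𝓕, g)`.  Here `C` plays the role of the algebra of smooth
functions on `M` and `V` that of the `C`-module of smooth vector fields.
`F` is the submodule of sections tangent to the foliation, `Fp` the submodule
of sections orthogonal to it, `pt`/`pp` the corresponding projections,
`g` the Riemannian metric, `lie` the Lie bracket, `act` the action of a vector
field on a function (directional derivative) and `nabla` the Levi-Civita
connection of `g`. -/
structure FoliatedRiemann (C : Type*) (V : Type*) [CommRing C] [Algebra ℝ C]
    [AddCommGroup V] [Module C V] where
  g : V → V → C
  lie : V → V → V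
  act : V → C → C
  nabla : V → V → V
  F : Submodule C V
  Fp : Submodule C V
  pt : V → V
  pp : V → V
  g_symm : ∀ v w, g v w = g w v
  g_addl : ∀ u v w, g (u + v) w = g u w + g v w
  g_smull : ∀ (c : C) (v w : V), g (c • v) w = c * g v w
  g_nondeg : ∀ v, (∀ w, g v w = 0) → v = 0
  pt_mem : ∀ v, pt v ∈ F
  pp_mem : ∀ v, pp v ∈ Fp
  decomp : ∀ v, pt v + pp v = v
  pt_of_mem : ∀ v ∈ F, pt v = v
  pp_of_mem : ∀ v ∈ Fp, pp v = v
  orth : ∀ u x, u ∈ F → x ∈ Fp → g u x = 0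
  full_orth : ∀ v, (∀ u ∈ F, g v u = 0) → v ∈ Fp
  torsion_free : ∀ v w, nabla v w - nabla w v = lie v w
  compat : ∀ e v w, act e (g v w) = g (nabla e v) w + g v (nabla e w)
  nabla_addl : ∀ u v w, nabla (u + v) w = nabla u w + nabla v w
  nabla_smull : ∀ (c : C) (v w : V), nabla (c • v) w = c • nabla v w
  nabla_addr : ∀ u v w, nabla u (v + w) = nabla u v + nabla u w
  nabla_leibniz : ∀ (u : V) (c : C) (v : V), nabla u (c • v) = act u c • v + c • nabla u v
  act_add : ∀ (v : V) (a b : C), act v (a + b) = act v a + act v b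
  act_mul : ∀ (v : V) (a b : C), act v (a * b) = act v a * b + a * act v b
  act_const : ∀ (v : V) (r : ℝ), act v (algebraMap ℝ C r) = 0

namespace FoliatedRiemann

variable {C V : Type*} [CommRing C] [Algebra ℝ C] [AddCommGroup V] [Module C V]
variable (M : FoliatedRiemann C V)

/-- A basic function: constant along the leaves of the foliation. -/
def Basic (f : C) : Prop := ∀ u ∈ M.F, M.act u f = 0

/-- The warped metric `g_f`: equal to `f² g` on tangent components and to `g`
on orthogonal components. -/
def gf (f : C) (v w : V) : C := f ^ 2 * M.g (M.pt v) (M.pt w) + M.g (M.pp v) (M.pp w)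

/-- The curvature tensor of a connection `n`. -/
def Rc (n : V → V → V) (x y z : V) : V := n x (n y z) - n y (n x z) - n (M.lie x y) z

/-- Lie derivative of a metric `h` in the direction `u`, evaluated on `x, y`. -/
def lieDer (h : V → V → C) (u x y : V) : C :=
  M.act u (h x y) - h (M.lie u x) y - h x (M.lie u y)

/-- `n` is the Levi-Civita connection of the metric `h`: it is torsion free and
metric-compatible (which determines it uniquely, by the Koszul formula). -/
def IsLeviCivita (n : V → V → V) (h : V → V → C) : Prop :=
  (∀ v w, n v w - n w v = M.lie v w) ∧
  (∀ e v w, M.act e (h v w) = h (n e v) w + h v (n e w))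

end FoliatedRiemann

namespace FoliatedRiemann

variable {C V : Type*} [CommRing C] [Algebra ℝ C] [AddCommGroup V] [Module C V]
variable (M : FoliatedRiemann C V)

lemma g_addr (u v w : V) : M.g u (v + w) = M.g u v + M.g u w := by
  rw [M.g_symm, M.g_addl, M.g_symm v u, M.g_symm w u]

lemma g_zerol (v : V) : M.g 0 v = 0 := by
  have h := M.g_addl 0 0 v
  rw [add_zero] at h
  exact (left_eq_add.mp h)

lemma g_zeror (v : V) : M.g v 0 = 0 := by rw [M.g_symm]; exact M.g_zerol v

lemma g_negl (v w : V) : M.g (-v) w = - M.g v w := by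
  have h := M.g_addl v (-v) w
  rw [add_neg_cancel, M.g_zerol] at h
  linear_combination -h

lemma g_subl (u v w : V) : M.g (u - v) w = M.g u w - M.g v w := by
  rw [sub_eq_add_neg, M.g_addl, M.g_negl, sub_eq_add_neg]

lemma g_subr (u v w : V) : M.g u (v - w) = M.g u v - M.g u w := by
  rw [M.g_symm, M.g_subl, M.g_symm v u, M.g_symm w u]

lemma g_smulr (c : C) (v w : V) : M.g v (c • w) = c * M.g v w := by
  rw [M.g_symm, M.g_smull, M.g_symm]

lemma act_zero (v : V) : M.act v 0 = 0 := by
  have h := M.act_add v 0 0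
  rw [add_zero] at h
  exact (left_eq_add.mp h)

lemma half_sum (c : C) : (1/2 : ℝ) • c + (1/2 : ℝ) • c = c := by
  rw [← add_smul]; norm_num

lemma half_sum' (c : C) : (1/2 : ℝ) • (c + c) = c := by
  rw [smul_add]; exact half_sum c

lemma half_cancel {a b : C} (h : a + a = b + b) : a = b := by
  have h2 : (1/2 : ℝ) • (a + a) = (1/2 : ℝ) • (b + b) := by rw [h]
  rwa [half_sum', half_sum'] at h2

lemma inf_zero {v : V} (hF : v ∈ M.F) (hFp : v ∈ M.Fp) : v = 0 := by
  apply M.g_nondeg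
  intro w
  have h1 : M.g v (M.pt w) = 0 := by
    rw [M.g_symm]; exact M.orth _ _ (M.pt_mem w) hFp
  have h2 : M.g v (M.pp w) = 0 := M.orth _ _ hF (M.pp_mem w)
  calc M.g v w = M.g v (M.pt w + M.pp w) := by rw [M.decomp]
    _ = 0 := by rw [M.g_addr, h1, h2, add_zero]

lemma unique_decomp {a b : V} (ha : a ∈ M.F) (hb : b ∈ M.Fp) :
    M.pt (a + b) = a ∧ M.pp (a + b) = b := by
  have hd := M.decomp (a + b)
  have key : M.pt (a + b) - a = b - M.pp (a + b) := by
    rw [sub_eq_sub_iff_add_eq_add, hd]; abel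
  have h0 : M.pt (a + b) - a = 0 := by
    apply M.inf_zero (sub_mem (M.pt_mem _) ha)
    rw [key]; exact sub_mem hb (M.pp_mem _)
  constructor
  · rw [sub_eq_zero] at h0; exact h0
  · have := key; rw [h0] at this; rw [← sub_eq_zero]
    exact (neg_eq_zero.mp (by rw [neg_sub]; exact this.symm))

lemma pt_add (v w : V) : M.pt (v + w) = M.pt v + M.pt w := by
  have h : v + w = (M.pt v + M.pt w) + (M.pp v + M.pp w) := by
    rw [show (M.pt v + M.pt w) + (M.pp v + M.pp w)
        = (M.pt v + M.pp v) + (M.pt w + M.pp w) by abel, M.decomp, M.decomp]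
  rw [h]
  exact (M.unique_decomp (add_mem (M.pt_mem v) (M.pt_mem w))
    (add_mem (M.pp_mem v) (M.pp_mem w))).1

lemma pp_add (v w : V) : M.pp (v + w) = M.pp v + M.pp w := by
  have h : v + w = (M.pt v + M.pt w) + (M.pp v + M.pp w) := by
    rw [show (M.pt v + M.pt w) + (M.pp v + M.pp w)
        = (M.pt v + M.pp v) + (M.pt w + M.pp w) by abel, M.decomp, M.decomp]
  rw [h]
  exact (M.unique_decomp (add_mem (M.pt_mem v) (M.pt_mem w))
    (add_mem (M.pp_mem v) (M.pp_mem w))).2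

lemma pt_neg (v : V) : M.pt (-v) = - M.pt v := by
  have h : -v = (- M.pt v) + (- M.pp v) := by
    rw [← neg_add, M.decomp]
  rw [h]
  exact (M.unique_decomp (neg_mem (M.pt_mem v)) (neg_mem (M.pp_mem v))).1

lemma pp_neg (v : V) : M.pp (-v) = - M.pp v := by
  have h : -v = (- M.pt v) + (- M.pp v) := by
    rw [← neg_add, M.decomp]
  rw [h]
  exact (M.unique_decomp (neg_mem (M.pt_mem v)) (neg_mem (M.pp_mem v))).2

lemma pt_sub (v w : V) : M.pt (v - w) = M.pt v - M.pt w := by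
  rw [sub_eq_add_neg, M.pt_add, M.pt_neg, sub_eq_add_neg]

lemma pp_sub (v w : V) : M.pp (v - w) = M.pp v - M.pp w := by
  rw [sub_eq_add_neg, M.pp_add, M.pp_neg, sub_eq_add_neg]

lemma pt_of_Fp {v : V} (h : v ∈ M.Fp) : M.pt v = 0 := by
  have hd := M.decomp v
  rw [M.pp_of_mem v h] at hd
  exact add_eq_right.mp hd

lemma pp_of_F {v : V} (h : v ∈ M.F) : M.pp v = 0 := by
  have hd := M.decomp v
  rw [M.pt_of_mem v h] at hd
  exact add_eq_left.mp hd

lemma g_decomp (v w : V) : M.g v w = M.g (M.pt v) (M.pt w) + M.g (M.pp v) (M.pp w) := by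
  conv_lhs => rw [← M.decomp v, ← M.decomp w]
  rw [M.g_addl, M.g_addr, M.g_addr,
    M.orth _ _ (M.pt_mem v) (M.pp_mem w),
    M.g_symm (M.pp v) (M.pt w), M.orth _ _ (M.pt_mem w) (M.pp_mem v)]
  ring

lemma g_F_left {a : V} (ha : a ∈ M.F) (v : V) : M.g a v = M.g a (M.pt v) := by
  rw [M.g_decomp a v, M.pt_of_mem a ha, M.pp_of_F ha, M.g_zerol, add_zero]

lemma gf_right_Fp (f : C) (a : V) {w : V} (hw : w ∈ M.Fp) : M.gf f a w = M.g a w := by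
  unfold gf
  rw [M.pt_of_Fp hw, M.pp_of_mem w hw, M.g_zeror, mul_zero, zero_add,
    M.g_decomp a w, M.pt_of_Fp hw, M.pp_of_mem w hw, M.g_zeror, zero_add]

lemma gf_right_F (f : C) (a : V) {u : V} (hu : u ∈ M.F) :
    M.gf f a u = f^2 * M.g (M.pt a) u := by
  unfold gf
  rw [M.pt_of_mem u hu, M.pp_of_F hu, M.g_zeror, add_zero]

lemma gf_subl (f : C) (a b w : V) : M.gf f (a - b) w = M.gf f a w - M.gf f b w := by
  unfold gf
  rw [M.pt_sub, M.pp_sub, M.g_subl, M.g_subl]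
  ring

lemma gf_addl (f : C) (a b w : V) : M.gf f (a + b) w = M.gf f a w + M.gf f b w := by
  unfold gf
  rw [M.pt_add, M.pp_add, M.g_addl, M.g_addl]
  ring

lemma gf_symm (f : C) (v w : V) : M.gf f v w = M.gf f w v := by
  unfold gf
  rw [M.g_symm (M.pt v), M.g_symm (M.pp v)]

lemma koszul (h : V → V → C) (n : V → V → V)
    (hsymm : ∀ v w, h v w = h w v)
    (haddl : ∀ u v w, h (u + v) w = h u w + h v w)
    (tf : ∀ v w, n v w - n w v = M.lie v w)
    (cp : ∀ e v w, M.act e (h v w) = h (n e v) w + h v (n e w))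
    (x y v : V) :
    h (n x y) v + h (n x y) v
      = M.act x (h y v) + M.act y (h x v) - M.act v (h x y)
        + h (M.lie x y) v - h (M.lie x v) y - h (M.lie y v) x := by
  have h0 : ∀ w, h 0 w = 0 := by
    intro w
    have e := haddl 0 0 w
    rw [add_zero] at e
    exact (left_eq_add.mp e)
  have hneg : ∀ v w, h (-v) w = - h v w := by
    intro v w
    have e := haddl v (-v) w
    rw [add_neg_cancel, h0] at e
    linear_combination -e
  have hsubl : ∀ u v w, h (u - v) w = h u w - h v w := by
    intro u v w
    rw [sub_eq_add_neg, haddl, hneg, sub_eq_add_neg]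
  rw [cp x y v, cp y x v, cp v x y, ← tf x y, ← tf x v, ← tf y v,
    hsubl, hsubl, hsubl, hsymm y (n x v), hsymm x (n y v), hsymm x (n v y)]
  ring

section Warped

variable (f finv : C) (nf A S : V → V → V)

lemma gA2
    (hAdef : ∀ x y, x ∈ M.Fp → y ∈ M.Fp → ∀ u ∈ M.F,
      M.g (A x y) u = (1/2 : ℝ) • (M.g (M.nabla x y) u - M.g (M.nabla y x) u))
    {z w : V} (hz : z ∈ M.Fp) (hw : w ∈ M.Fp) {u : V} (hu : u ∈ M.F) :
    M.g (M.lie z w) u = M.g (A z w) u + M.g (A z w) u := by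
  rw [hAdef z w hz hw u hu, half_sum, ← M.torsion_free, M.g_subl]

lemma gAS
    (hAdef : ∀ x y, x ∈ M.Fp → y ∈ M.Fp → ∀ u ∈ M.F,
      M.g (A x y) u = (1/2 : ℝ) • (M.g (M.nabla x y) u - M.g (M.nabla y x) u))
    (hSdef : ∀ x y, x ∈ M.Fp → y ∈ M.Fp → ∀ u ∈ M.F,
      M.g (S x y) u = (1/2 : ℝ) • (M.g (M.nabla x y) u + M.g (M.nabla y x) u))
    {z w : V} (hz : z ∈ M.Fp) (hw : w ∈ M.Fp) {u : V} (hu : u ∈ M.F) :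
    M.g (M.nabla z w) u = M.g (A z w) u + M.g (S z w) u := by
  rw [hAdef z w hz hw u hu, hSdef z w hz hw u hu, ← smul_add,
    show (M.g (M.nabla z w) u - M.g (M.nabla w z) u)
        + (M.g (M.nabla z w) u + M.g (M.nabla w z) u)
      = M.g (M.nabla z w) u + M.g (M.nabla z w) u by ring, half_sum']

lemma key_perp
    (hnf : M.IsLeviCivita nf (M.gf f))
    (hAdef : ∀ x y, x ∈ M.Fp → y ∈ M.Fp → ∀ u ∈ M.F,
      M.g (A x y) u = (1/2 : ℝ) • (M.g (M.nabla x y) u - M.g (M.nabla y x) u))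
    (v : V) {z w : V} (hz : z ∈ M.Fp) (hw : w ∈ M.Fp) :
    M.gf f (nf v z) w = M.g (M.nabla v z) w + (1 - f^2) * M.g (A z w) (M.pt v) := by
  apply half_cancel
  have Kf := M.koszul (M.gf f) nf (M.gf_symm f) (M.gf_addl f) hnf.1 hnf.2 v z w
  have Kg := M.koszul M.g M.nabla M.g_symm M.g_addl M.torsion_free M.compat v z w
  rw [M.gf_right_Fp f z hw, M.gf_right_Fp f v hw, M.gf_right_Fp f v hz,
    M.gf_right_Fp f (M.lie v z) hw, M.gf_right_Fp f (M.lie v w) hz] at Kf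
  have hzwv : M.gf f (M.lie z w) v
      = M.g (M.lie z w) v
        + (f^2 - 1) * (M.g (A z w) (M.pt v) + M.g (A z w) (M.pt v)) := by
    have e1 : M.g (M.pt (M.lie z w)) (M.pt v)
        = M.g (A z w) (M.pt v) + M.g (A z w) (M.pt v) := by
      have e2 : M.g (M.lie z w) (M.pt v) = M.g (M.pt (M.lie z w)) (M.pt v) := by
        rw [M.g_decomp (M.lie z w) (M.pt v), M.pt_of_mem _ (M.pt_mem v),
          M.pp_of_F (M.pt_mem v), M.g_zeror, add_zero]
      rw [← e2]
      exact M.gA2 A hAdef hz hw (M.pt_mem v)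
    unfold gf
    rw [M.g_decomp (M.lie z w) v, e1]
    ring
  rw [hzwv] at Kf
  linear_combination Kf - Kg

lemma key_tan
    (hnf : M.IsLeviCivita nf (M.gf f))
    (hAdef : ∀ x y, x ∈ M.Fp → y ∈ M.Fp → ∀ u ∈ M.F,
      M.g (A x y) u = (1/2 : ℝ) • (M.g (M.nabla x y) u - M.g (M.nabla y x) u))
    (hSdef : ∀ x y, x ∈ M.Fp → y ∈ M.Fp → ∀ u ∈ M.F,
      M.g (S x y) u = (1/2 : ℝ) • (M.g (M.nabla x y) u + M.g (M.nabla y x) u))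
    {y z : V} (hy : y ∈ M.Fp) (hz : z ∈ M.Fp) {u : V} (hu : u ∈ M.F) :
    M.gf f (nf y z) u = f^2 * M.g (A y z) u + M.g (S y z) u := by
  apply half_cancel
  have Kf := M.koszul (M.gf f) nf (M.gf_symm f) (M.gf_addl f) hnf.1 hnf.2 y z u
  have Kg := M.koszul M.g M.nabla M.g_symm M.g_addl M.torsion_free M.compat y z u
  have ezu : M.g z u = 0 := by rw [M.g_symm]; exact M.orth u z hu hz
  have eyu : M.g y u = 0 := by rw [M.g_symm]; exact M.orth u y hu hy
  have efzu : M.gf f z u = 0 := by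
    rw [M.gf_right_F f z hu, M.pt_of_Fp hz, M.g_zerol, mul_zero]
  have efyu : M.gf f y u = 0 := by
    rw [M.gf_right_F f y hu, M.pt_of_Fp hy, M.g_zerol, mul_zero]
  have elyz : M.gf f (M.lie y z) u = f^2 * M.g (M.lie y z) u := by
    rw [M.gf_right_F f (M.lie y z) hu]
    congr 1
    rw [M.g_decomp (M.lie y z) u, M.pt_of_mem u hu, M.pp_of_F hu, M.g_zeror, add_zero]
  rw [efzu, efyu, M.act_zero, M.act_zero, M.gf_right_Fp f y hz,
    M.gf_right_Fp f (M.lie y u) hz, elyz] at Kf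
  rw [ezu, eyu, M.act_zero, M.act_zero] at Kg
  have efzuy : M.gf f (M.lie z u) y = M.g (M.lie z u) y := M.gf_right_Fp f _ hy
  rw [efzuy] at Kf
  have eA := M.gA2 A hAdef hy hz hu
  have eAS := M.gAS A S hAdef hSdef hy hz hu
  linear_combination Kf - Kg + (f^2 - 1) * eA + 2 * eAS

end Warped

section Warped2

variable (f finv : C) (nf A S : V → V → V)

/-- Structure of `∇_y z` for `y, z` orthogonal. -/
lemma nabla_structure
    (hAval : ∀ x y, x ∈ M.Fp → y ∈ M.Fp → A x y ∈ M.F)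
    (hAdef : ∀ x y, x ∈ M.Fp → y ∈ M.Fp → ∀ u ∈ M.F,
      M.g (A x y) u = (1/2 : ℝ) • (M.g (M.nabla x y) u - M.g (M.nabla y x) u))
    (hSval : ∀ x y, x ∈ M.Fp → y ∈ M.Fp → S x y ∈ M.F)
    (hSdef : ∀ x y, x ∈ M.Fp → y ∈ M.Fp → ∀ u ∈ M.F,
      M.g (S x y) u = (1/2 : ℝ) • (M.g (M.nabla x y) u + M.g (M.nabla y x) u))
    {y z : V} (hy : y ∈ M.Fp) (hz : z ∈ M.Fp) :
    M.nabla y z = (A y z + S y z) + M.pp (M.nabla y z) := by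
  have hF : A y z + S y z ∈ M.F := add_mem (hAval y z hy hz) (hSval y z hy hz)
  rw [← sub_eq_zero]
  apply M.g_nondeg
  intro v
  have hFpair : ∀ u ∈ M.F,
      M.g (M.nabla y z - ((A y z + S y z) + M.pp (M.nabla y z))) u = 0 := by
    intro u hu
    rw [M.g_subl, M.g_addl, M.g_addl,
      M.gAS A S hAdef hSdef hy hz hu]
    rw [show M.g (M.pp (M.nabla y z)) u = 0 by
      rw [M.g_symm]; exact M.orth u _ hu (M.pp_mem _)]
    ring
  have hPpair : ∀ w ∈ M.Fp,
      M.g (M.nabla y z - ((A y z + S y z) + M.pp (M.nabla y z))) w = 0 := by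
    intro w hw
    rw [M.g_subl, M.g_addl, M.g_addl,
      M.orth _ _ (hAval y z hy hz) hw, M.orth _ _ (hSval y z hy hz) hw]
    have e : M.g (M.nabla y z) w = M.g (M.pp (M.nabla y z)) w := by
      rw [M.g_decomp (M.nabla y z) w, M.pt_of_Fp hw, M.g_zeror,
        M.pp_of_mem w hw, zero_add,
        M.g_decomp (M.pp (M.nabla y z)) w, M.pt_of_Fp hw, M.g_zeror,
        M.pp_of_mem w hw, zero_add, M.pp_of_mem _ (M.pp_mem _)]
    rw [e]; ring
  calc M.g _ v = M.g _ (M.pt v + M.pp v) := by rw [M.decomp]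
    _ = 0 := by
        rw [M.g_addr, hFpair _ (M.pt_mem v), hPpair _ (M.pp_mem v), add_zero]

/-- Structure of `∇^f_y z` for `y, z` orthogonal. -/
lemma nf_structure
    (hfinv : f * finv = 1)
    (hnf : M.IsLeviCivita nf (M.gf f))
    (hAval : ∀ x y, x ∈ M.Fp → y ∈ M.Fp → A x y ∈ M.F)
    (hAdef : ∀ x y, x ∈ M.Fp → y ∈ M.Fp → ∀ u ∈ M.F,
      M.g (A x y) u = (1/2 : ℝ) • (M.g (M.nabla x y) u - M.g (M.nabla y x) u))
    (hSval : ∀ x y, x ∈ M.Fp → y ∈ M.Fp → S x y ∈ M.F)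
    (hSdef : ∀ x y, x ∈ M.Fp → y ∈ M.Fp → ∀ u ∈ M.F,
      M.g (S x y) u = (1/2 : ℝ) • (M.g (M.nabla x y) u + M.g (M.nabla y x) u))
    {y z : V} (hy : y ∈ M.Fp) (hz : z ∈ M.Fp) :
    nf y z = (A y z + finv^2 • S y z) + M.pp (M.nabla y z) := by
  have hff : f^2 * finv^2 = 1 := by
    rw [← mul_pow, hfinv, one_pow]
  rw [← sub_eq_zero]
  apply M.g_nondeg
  intro v
  have hFpair : ∀ u ∈ M.F,
      M.g (nf y z - ((A y z + finv^2 • S y z) + M.pp (M.nabla y z))) u = 0 := by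
    intro u hu
    rw [M.g_subl, M.g_addl, M.g_addl, M.g_smull]
    have e1 : M.gf f (nf y z) u = f^2 * M.g (M.pt (nf y z)) u := M.gf_right_F f _ hu
    have e2 : M.gf f (nf y z) u = f^2 * M.g (A y z) u + M.g (S y z) u :=
      M.key_tan f nf A S hnf hAdef hSdef hy hz hu
    have e3 : M.g (nf y z) u = M.g (M.pt (nf y z)) u := by
      rw [M.g_decomp (nf y z) u, M.pt_of_mem u hu, M.pp_of_F hu, M.g_zeror, add_zero]
    have e4 : M.g (nf y z) u = M.g (A y z) u + finv^2 * M.g (S y z) u := by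
      have e5 : f^2 * M.g (nf y z) u = f^2 * M.g (A y z) u + M.g (S y z) u := by
        rw [e3, ← e1, e2]
      calc M.g (nf y z) u = (f^2 * finv^2) * M.g (nf y z) u := by rw [hff, one_mul]
        _ = finv^2 * (f^2 * M.g (nf y z) u) := by ring
        _ = _ := by rw [e5]; linear_combination M.g (A y z) u * hff
    rw [e4, show M.g (M.pp (M.nabla y z)) u = 0 by
      rw [M.g_symm]; exact M.orth u _ hu (M.pp_mem _)]
    ring
  have hPpair : ∀ w ∈ M.Fp,
      M.g (nf y z - ((A y z + finv^2 • S y z) + M.pp (M.nabla y z))) w = 0 := by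
    intro w hw
    rw [M.g_subl, M.g_addl, M.g_addl, M.g_smull,
      M.orth _ _ (hAval y z hy hz) hw, M.orth _ _ (hSval y z hy hz) hw]
    have e1 : M.g (nf y z) w = M.g (M.nabla y z) w := by
      rw [← M.gf_right_Fp f (nf y z) hw,
        M.key_perp f nf A hnf hAdef y hz hw, M.pt_of_Fp hy, M.g_zeror,
        mul_zero, add_zero]
    have e2 : M.g (M.nabla y z) w = M.g (M.pp (M.nabla y z)) w := by
      rw [M.g_decomp (M.nabla y z) w, M.pt_of_Fp hw, M.g_zeror,
        M.pp_of_mem w hw, zero_add,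
        M.g_decomp (M.pp (M.nabla y z)) w, M.pt_of_Fp hw, M.g_zeror,
        M.pp_of_mem w hw, zero_add, M.pp_of_mem _ (M.pp_mem _)]
    rw [e1, e2]; ring
  calc M.g _ v = M.g _ (M.pt v + M.pp v) := by rw [M.decomp]
    _ = 0 := by
        rw [M.g_addr, hFpair _ (M.pt_mem v), hPpair _ (M.pp_mem v), add_zero]

end Warped2

section Warped3

variable (f finv : C) (nf A S : V → V → V)

/-- The mixed product `g_f(∇^f_y z, ∇^f_x w)`. -/
lemma gf_nf_nf
    (hfinv : f * finv = 1)
    (hnf : M.IsLeviCivita nf (M.gf f))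
    (hAval : ∀ x y, x ∈ M.Fp → y ∈ M.Fp → A x y ∈ M.F)
    (hAdef : ∀ x y, x ∈ M.Fp → y ∈ M.Fp → ∀ u ∈ M.F,
      M.g (A x y) u = (1/2 : ℝ) • (M.g (M.nabla x y) u - M.g (M.nabla y x) u))
    (hSval : ∀ x y, x ∈ M.Fp → y ∈ M.Fp → S x y ∈ M.F)
    (hSdef : ∀ x y, x ∈ M.Fp → y ∈ M.Fp → ∀ u ∈ M.F,
      M.g (S x y) u = (1/2 : ℝ) • (M.g (M.nabla x y) u + M.g (M.nabla y x) u))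
    {x y z w : V} (hx : x ∈ M.Fp) (hy : y ∈ M.Fp) (hz : z ∈ M.Fp) (hw : w ∈ M.Fp) :
    M.gf f (nf y z) (nf x w)
      = M.g (M.nabla y z) (M.nabla x w)
        + (f^2 - 1) * M.g (A y z) (A x w)
        + (finv^2 - 1) * M.g (S y z) (S x w) := by
  have hff : f^2 * finv^2 = 1 := by rw [← mul_pow, hfinv, one_pow]
  have hFyz : A y z + finv^2 • S y z ∈ M.F :=
    add_mem (hAval y z hy hz) (Submodule.smul_mem _ _ (hSval y z hy hz))
  have hFxw : A x w + finv^2 • S x w ∈ M.F :=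
    add_mem (hAval x w hx hw) (Submodule.smul_mem _ _ (hSval x w hx hw))
  have s1 := M.nf_structure f finv nf A S hfinv hnf hAval hAdef hSval hSdef hy hz
  have s2 := M.nf_structure f finv nf A S hfinv hnf hAval hAdef hSval hSdef hx hw
  have pt1 : M.pt (nf y z) = A y z + finv^2 • S y z := by
    rw [s1]; exact (M.unique_decomp hFyz (M.pp_mem _)).1
  have pp1 : M.pp (nf y z) = M.pp (M.nabla y z) := by
    rw [s1]; exact (M.unique_decomp hFyz (M.pp_mem _)).2
  have pt2 : M.pt (nf x w) = A x w + finv^2 • S x w := by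
    rw [s2]; exact (M.unique_decomp hFxw (M.pp_mem _)).1
  have pp2 : M.pp (nf x w) = M.pp (M.nabla x w) := by
    rw [s2]; exact (M.unique_decomp hFxw (M.pp_mem _)).2
  have n1 := M.nabla_structure A S hAval hAdef hSval hSdef hy hz
  have n2 := M.nabla_structure A S hAval hAdef hSval hSdef hx hw
  have hGyz : A y z + S y z ∈ M.F := add_mem (hAval y z hy hz) (hSval y z hy hz)
  have hGxw : A x w + S x w ∈ M.F := add_mem (hAval x w hx hw) (hSval x w hx hw)
  have ptn1 : M.pt (M.nabla y z) = A y z + S y z := by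
    conv_lhs => rw [n1]
    exact (M.unique_decomp hGyz (M.pp_mem _)).1
  have ptn2 : M.pt (M.nabla x w) = A x w + S x w := by
    conv_lhs => rw [n2]
    exact (M.unique_decomp hGxw (M.pp_mem _)).1
  unfold gf
  rw [pt1, pp1, pt2, pp2, M.g_decomp (M.nabla y z) (M.nabla x w), ptn1, ptn2,
    M.g_addl, M.g_addl, M.g_addr, M.g_addr, M.g_addr, M.g_addr,
    M.g_smull, M.g_smull, M.g_smulr, M.g_smulr]
  linear_combination (M.g (A y z) (S x w) + M.g (S y z) (A x w)
    + finv^2 * M.g (S y z) (S x w)) * hff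

end Warped3

end FoliatedRiemann

/-- the curvature tensor of the warped metric on four vectors
orthogonal to the foliation:
`⟨R^f(X,Y)Z,W⟩_f = ⟨R(X,Y)Z,W⟩ − 2(1−f²)⟨A(X,Y),A(Z,W)⟩
  + (1−f²)(⟨A(X,W),A(Y,Z)⟩ − ⟨A(X,Z),A(Y,W)⟩)
  − ((1−f²)/f²)(⟨S(X,W),S(Y,Z)⟩ − ⟨S(X,Z),S(Y,W)⟩)`. -/
theorem warped_curvature_four_orthogonal
    {C V : Type*} [CommRing C] [PartialOrder C] [Algebra ℝ C]
    [AddCommGroup V] [Module C V]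
    (M : FoliatedRiemann C V) (f finv : C) (hfpos : 0 < f) (hfinv : f * finv = 1)
    (hbasic : M.Basic f)
    (nf A S : V → V → V)
    (hnf : M.IsLeviCivita nf (M.gf f))
    (hAval : ∀ x y, x ∈ M.Fp → y ∈ M.Fp → A x y ∈ M.F)
    (hAdef : ∀ x y, x ∈ M.Fp → y ∈ M.Fp → ∀ u ∈ M.F,
      M.g (A x y) u = (1/2 : ℝ) • (M.g (M.nabla x y) u - M.g (M.nabla y x) u))
    (hSval : ∀ x y, x ∈ M.Fp → y ∈ M.Fp → S x y ∈ M.F)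
    (hSdef : ∀ x y, x ∈ M.Fp → y ∈ M.Fp → ∀ u ∈ M.F,
      M.g (S x y) u = (1/2 : ℝ) • (M.g (M.nabla x y) u + M.g (M.nabla y x) u)) :
    ∀ x y z w, x ∈ M.Fp → y ∈ M.Fp → z ∈ M.Fp → w ∈ M.Fp →
      M.gf f (M.Rc nf x y z) w
        = M.g (M.Rc M.nabla x y z) w
          - (2 : C) * (1 - f ^ 2) * M.g (A x y) (A z w)
          + (1 - f ^ 2) * (M.g (A x w) (A y z) - M.g (A x z) (A y w))
          - (1 - f ^ 2) * finv ^ 2 * (M.g (S x w) (S y z) - M.g (S x z) (S y w)) := by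
  intro x y z w hx hy hz hw
  have hff : f^2 * finv^2 = 1 := by rw [← mul_pow, hfinv, one_pow]
  -- first-order pairings
  have d1 : M.gf f (nf y z) w = M.g (M.nabla y z) w := by
    rw [M.key_perp f nf A hnf hAdef y hz hw, M.pt_of_Fp hy, M.g_zeror, mul_zero, add_zero]
  have d2 : M.gf f (nf x z) w = M.g (M.nabla x z) w := by
    rw [M.key_perp f nf A hnf hAdef x hz hw, M.pt_of_Fp hx, M.g_zeror, mul_zero, add_zero]
  have c1 := hnf.2 x (nf y z) w
  have c2 := hnf.2 y (nf x z) w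
  rw [d1] at c1
  rw [d2] at c2
  have e1 := M.compat x (M.nabla y z) w
  have e2 := M.compat y (M.nabla x z) w
  have p1 := M.gf_nf_nf f finv nf A S hfinv hnf hAval hAdef hSval hSdef hx hy hz hw
  have p2 := M.gf_nf_nf f finv nf A S hfinv hnf hAval hAdef hSval hSdef hy hx hz hw
  have T1eq : M.gf f (nf x (nf y z)) w
      = M.g (M.nabla x (M.nabla y z)) w
        + (1 - f^2) * M.g (A y z) (A x w)
        - (1 - f^2) * finv^2 * M.g (S y z) (S x w) := by
    linear_combination (-1 : C) * c1 + e1 - p1 - M.g (S y z) (S x w) * hff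
  have T2eq : M.gf f (nf y (nf x z)) w
      = M.g (M.nabla y (M.nabla x z)) w
        + (1 - f^2) * M.g (A x z) (A y w)
        - (1 - f^2) * finv^2 * M.g (S x z) (S y w) := by
    linear_combination (-1 : C) * c2 + e2 - p2 - M.g (S x z) (S y w) * hff
  have q1 : M.g (A z w) (M.pt (M.lie x y)) = M.g (A x y) (A z w) + M.g (A x y) (A z w) := by
    rw [← M.g_F_left (hAval z w hz hw) (M.lie x y), M.g_symm]
    exact M.gA2 A hAdef hx hy (hAval z w hz hw)
  have t3 := M.key_perp f nf A hnf hAdef (M.lie x y) hz hw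
  have T3eq : M.gf f (nf (M.lie x y) z) w
      = M.g (M.nabla (M.lie x y) z) w
        + (1 - f^2) * (M.g (A x y) (A z w) + M.g (A x y) (A z w)) := by
    linear_combination t3 + (1 - f^2) * q1
  have sym1 : M.g (A y z) (A x w) = M.g (A x w) (A y z) := M.g_symm _ _
  have sym2 : M.g (S y z) (S x w) = M.g (S x w) (S y z) := M.g_symm _ _
  simp only [FoliatedRiemann.Rc]
  rw [M.gf_subl, M.gf_subl, M.g_subl, M.g_subl]
  linear_combination T1eq - T2eq - T3eq + (1 - f^2) * sym1 - (1 - f^2) * finv^2 * sym2
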